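/- If f_j ⇉ f uniformly on T, then for every ε > 0 and every ε'' > ε: V_{ε''}(f,T) ≤ liminf_{j→∞} V_ε(f_j,T). -/
import Mathlib


open Filter Set
open scoped ENNReal Topology

/-- The approximate (ε-)variation: infimum of Jordan variations of functions of
bounded variation uniformly ε-close to `f` on `T` (⊤ if no such function). -/
noncomputable def approxVar {M : Type*} [MetricSpace M] (f : ℝ → M) (T : Set ℝ) (ε : ℝ) : ℝ≥0∞ :=
  ⨅ (g : ℝ → M) (_ : eVariationOn g T ≠ ⊤ ∧ ∀ t ∈ T, dist (f t) (g t) ≤ ε),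
    eVariationOn g T

/-- The oscillation (diameter of the image) of `f` on `T`, valued in `[0,∞]`. -/
noncomputable def oscOn {M : Type*} [MetricSpace M] (f : ℝ → M) (T : Set ℝ) : ℝ≥0∞ :=
  ⨆ s ∈ T, ⨆ t ∈ T, edist (f s) (f t)

theorem approxVar_le_liminf {M : Type*} [MetricSpace M]
    (T : Set ℝ) (hT : T.Nonempty) (f : ℝ → M) (fj : ℕ → ℝ → M)
    (huc : TendstoUniformlyOn fj f atTop T)
    {ε ε'' : ℝ} (hε : 0 < ε) (hεε'' : ε < ε'') :
    approxVar f T ε'' ≤ Filter.liminf (fun j => approxVar (fj j) T ε) Filter.atTop := by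
  have hδ : (0:ℝ) < ε'' - ε := by linarith
  have hev : ∀ᶠ j in atTop, approxVar f T ε'' ≤ approxVar (fj j) T ε := by
    filter_upwards [(Metric.tendstoUniformlyOn_iff.1 huc) (ε'' - ε) hδ] with j hj
    refine le_iInf₂ fun g hg => ?_
    refine iInf₂_le g ⟨hg.1, fun t ht => ?_⟩
    calc dist (f t) (g t) ≤ dist (f t) (fj j t) + dist (fj j t) (g t) := dist_triangle _ _ _
      _ ≤ (ε'' - ε) + ε := add_le_add (le_of_lt (hj t ht)) (hg.2 t ht)
      _ = ε'' := by ring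
  exact le_liminf_of_le (by isBoundedDefault) hev
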